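/- With notation as in the affinity-distance characterization, the maximum of Tr(√ρ √σ) over block-diagonal states σ = Σ_m P_m σ P_m equals (Σ_m Tr[(P_m √ρ P_m)^2])^{1/2}, and it is attained at σ_ρ = ⊕_m (P_m √ρ P_m)^2 / Σ_n Tr[(P_n √ρ P_n)^2]. -/

import Mathlib

open scoped ComplexOrder

open Classical in
/-- The positive semidefinite square root of a matrix (zero if not psd). -/
noncomputable def msqrt {d : ℕ} (ρ : Matrix (Fin d) (Fin d) ℂ) : Matrix (Fin d) (Fin d) ℂ :=
  if h : ρ.PosSemidef then
    (h.1.eigenvectorUnitary : Matrix (Fin d) (Fin d) ℂ) *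
      Matrix.diagonal ((↑) ∘ Real.sqrt ∘ h.1.eigenvalues) *
      (star h.1.eigenvectorUnitary : Matrix (Fin d) (Fin d) ℂ)
  else 0

open scoped MatrixOrder in
lemma msqrt_eq_cfc {d : ℕ} {ρ : Matrix (Fin d) (Fin d) ℂ} (h : ρ.PosSemidef) :
    msqrt ρ = CFC.sqrt ρ := by
  rw [CFC.sqrt_eq_cfc, cfc_nnreal_eq_real _ ρ, h.1.cfc_eq, msqrt, dif_pos h]
  simp only [Matrix.IsHermitian.cfc, Real.coe_sqrt, Real.coe_toNNReal']
  rw [Unitary.conjStarAlgAut_apply]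
  congr 3
  funext i
  simp [h.eigenvalues_nonneg i]

/-- The square root of a psd matrix, as a helper. -/
noncomputable def Matrix.PosSemidef.sqrt {d : ℕ} {ρ : Matrix (Fin d) (Fin d) ℂ}
    (_h : ρ.PosSemidef) : Matrix (Fin d) (Fin d) ℂ := msqrt ρ

open scoped MatrixOrder in
lemma Matrix.PosSemidef.posSemidef_sqrt {d : ℕ} {ρ : Matrix (Fin d) (Fin d) ℂ}
    (h : ρ.PosSemidef) : h.sqrt.PosSemidef := by
  rw [Matrix.PosSemidef.sqrt, msqrt_eq_cfc h]
  exact Matrix.nonneg_iff_posSemidef.mp (CFC.sqrt_nonneg ρ)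

open scoped MatrixOrder in
lemma Matrix.PosSemidef.sqrt_mul_self {d : ℕ} {ρ : Matrix (Fin d) (Fin d) ℂ}
    (h : ρ.PosSemidef) : h.sqrt * h.sqrt = ρ := by
  rw [Matrix.PosSemidef.sqrt, msqrt_eq_cfc h]
  exact CFC.sqrt_mul_sqrt_self ρ h.nonneg

open scoped MatrixOrder in
lemma Matrix.PosSemidef.eq_sqrt_of_sq_eq {d : ℕ} {X ρ : Matrix (Fin d) (Fin d) ℂ}
    (hX : X.PosSemidef) (h : ρ.PosSemidef) (hsq : X ^ 2 = ρ) : X = h.sqrt := by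
  rw [Matrix.PosSemidef.sqrt, msqrt_eq_cfc h, eq_comm,
    CFC.sqrt_eq_iff ρ X h.nonneg hX.nonneg, ← pow_two, hsq]

namespace MTAux

open Matrix Complex

variable {d : ℕ}

noncomputable def vec (X : Matrix (Fin d) (Fin d) ℂ) : EuclideanSpace ℂ (Fin d × Fin d) :=
  WithLp.toLp 2 (fun p : Fin d × Fin d => X p.1 p.2)

lemma trace_eq_inner {X Y : Matrix (Fin d) (Fin d) ℂ} (hX : X.IsHermitian) :
    (X * Y).trace = inner ℂ (vec X) (vec Y) := by
  rw [PiLp.inner_apply]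
  simp only [RCLike.inner_apply, vec, RCLike.star_def]
  rw [Matrix.trace, Fintype.sum_prod_type]
  simp only [Matrix.diag_apply, Matrix.mul_apply]
  rw [Finset.sum_comm]
  refine Finset.sum_congr rfl fun i _ => Finset.sum_congr rfl fun j _ => ?_
  rw [show (starRingEnd ℂ) (X i j) = X j i from hX.apply j i]
  ring

lemma norm_vec_eq {X : Matrix (Fin d) (Fin d) ℂ} (hX : X.IsHermitian) :
    ‖vec X‖ = Real.sqrt ((X * X).trace.re) := by
  rw [@norm_eq_sqrt_re_inner ℂ, ← trace_eq_inner hX]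
  rfl

lemma trace_sq_re_nonneg {X : Matrix (Fin d) (Fin d) ℂ} (hX : X.IsHermitian) :
    0 ≤ (X * X).trace.re := by
  rw [trace_eq_inner hX]
  exact inner_self_nonneg (𝕜 := ℂ) (x := vec X)

lemma trace_sq_real {X : Matrix (Fin d) (Fin d) ℂ} (hX : X.IsHermitian) :
    (X * X).trace = (((X * X).trace.re : ℝ) : ℂ) := by
  have h := inner_self_ofReal_re (𝕜 := ℂ) (x := vec X)
  rw [trace_eq_inner hX]
  simpa using h.symm

lemma trace_mul_re_le {X Y : Matrix (Fin d) (Fin d) ℂ}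
    (hX : X.IsHermitian) (hY : Y.IsHermitian) :
    (X * Y).trace.re ≤ Real.sqrt ((X * X).trace.re) * Real.sqrt ((Y * Y).trace.re) := by
  rw [← norm_vec_eq hX, ← norm_vec_eq hY, trace_eq_inner hX]
  exact re_inner_le_norm (𝕜 := ℂ) (vec X) (vec Y)

lemma psd_smul {A : Matrix (Fin d) (Fin d) ℂ} (hA : A.PosSemidef) {c : ℝ} (hc : 0 ≤ c) :
    ((c : ℂ) • A).PosSemidef := by
  constructor
  · have h : ((c : ℂ) • A)ᴴ = (starRingEnd ℂ) (c : ℂ) • Aᴴ := Matrix.conjTranspose_smul _ _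
    rw [Matrix.IsHermitian, h, hA.1, Complex.conj_ofReal]
  · intro x
    exact (hA.smul (Complex.zero_le_real.mpr hc)).2 x

lemma psd_sum {M : ℕ} {f : Fin M → Matrix (Fin d) (Fin d) ℂ}
    (hf : ∀ m, (f m).PosSemidef) : (∑ m, f m).PosSemidef :=
  Finset.sum_induction f _ (fun _ _ ha hb => ha.add hb) Matrix.PosSemidef.zero
    (fun m _ => hf m)

lemma sqrt_mul_eq_zero {T B : Matrix (Fin d) (Fin d) ℂ} (hT : T.PosSemidef)
    (h : T * B = 0) : hT.sqrt * B = 0 := by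
  ext i j
  set x : Fin d → ℂ := fun k => B k j with hx
  have hTx : T *ᵥ x = 0 := by
    ext k
    have := congrFun (congrFun h k) j
    simpa [Matrix.mul_apply, Matrix.mulVec, dotProduct, hx] using this
  have hdot : star (hT.sqrt *ᵥ x) ⬝ᵥ (hT.sqrt *ᵥ x) = 0 := by
    rw [Matrix.star_mulVec, hT.posSemidef_sqrt.1, Matrix.dotProduct_mulVec,
      Matrix.vecMul_vecMul, hT.sqrt_mul_self, ← Matrix.dotProduct_mulVec, hTx,
      dotProduct_zero]
  have h1 : hT.sqrt *ᵥ x = 0 := dotProduct_star_self_eq_zero.mp hdot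
  have := congrFun h1 i
  simpa [Matrix.mulVec, Matrix.mul_apply, dotProduct, hx] using this

lemma sum_sqrt_mul_sqrt_le {M : ℕ} (b c : Fin M → ℝ) (hb : ∀ m, 0 ≤ b m)
    (hc : ∀ m, 0 ≤ c m) :
    ∑ m, Real.sqrt (b m) * Real.sqrt (c m) ≤
      Real.sqrt (∑ m, b m) * Real.sqrt (∑ m, c m) := by
  have h := Finset.sum_sq_le_sum_mul_sum_of_sq_eq_mul Finset.univ
    (r := fun m => Real.sqrt (b m) * Real.sqrt (c m)) (f := b) (g := c)
    (fun m _ => hb m) (fun m _ => hc m)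
    (fun m _ => by rw [mul_pow, Real.sq_sqrt (hb m), Real.sq_sqrt (hc m)])
  have h0 : 0 ≤ ∑ m, Real.sqrt (b m) * Real.sqrt (c m) :=
    Finset.sum_nonneg fun m _ => mul_nonneg (Real.sqrt_nonneg _) (Real.sqrt_nonneg _)
  calc ∑ m, Real.sqrt (b m) * Real.sqrt (c m)
      = Real.sqrt ((∑ m, Real.sqrt (b m) * Real.sqrt (c m)) ^ 2) :=
        (Real.sqrt_sq h0).symm
    _ ≤ Real.sqrt ((∑ m, b m) * ∑ m, c m) := Real.sqrt_le_sqrt h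
    _ = Real.sqrt (∑ m, b m) * Real.sqrt (∑ m, c m) :=
        Real.sqrt_mul (Finset.sum_nonneg fun m _ => hb m) _

theorem aux_upper {d M : ℕ} (P : Fin M → Matrix (Fin d) (Fin d) ℂ)
    (hPh : ∀ m, (P m).IsHermitian) (hPi : ∀ m, P m * P m = P m)
    (hPo : ∀ m m', m ≠ m' → P m * P m' = 0)
    (A : Matrix (Fin d) (Fin d) ℂ) (hA : A.IsHermitian)
    (σ : Matrix (Fin d) (Fin d) ℂ) (hσ : σ.PosSemidef) (hσtr : σ.trace = 1)
    (hσb : σ = ∑ m, P m * σ * P m) :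
    (A * msqrt σ).trace.re ≤
      Real.sqrt (∑ m, ((P m * A * P m) ^ 2).trace.re) := by
  have hT : ∀ m, (P m * σ * P m).PosSemidef := fun m => by
    have h := hσ.conjTranspose_mul_mul_same (P m)
    rwa [show (P m)ᴴ = P m from hPh m] at h
  set Sm : Fin M → Matrix (Fin d) (Fin d) ℂ := fun m => (hT m).sqrt with hSm_def
  have hSmH : ∀ m, (Sm m).IsHermitian := fun m => (hT m).posSemidef_sqrt.1
  have hSmP : ∀ m, Sm m * P m = Sm m := by
    intro m
    have hz : (P m * σ * P m) * (1 - P m) = 0 := by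
      rw [Matrix.mul_sub, Matrix.mul_one, Matrix.mul_assoc (P m * σ) (P m) (P m),
        hPi m, sub_self]
    have h1 := sqrt_mul_eq_zero (hT m) hz
    have h2 : Sm m - Sm m * P m = 0 := by
      rwa [Matrix.mul_sub, Matrix.mul_one] at h1
    have := sub_eq_zero.mp h2
    exact this.symm
  have hPSm : ∀ m, P m * Sm m = Sm m := by
    intro m
    have h := congrArg Matrix.conjTranspose (hSmP m)
    rwa [Matrix.conjTranspose_mul, hSmH m, hPh m] at h
  have habs : ∀ m, P m * Sm m * P m = Sm m := fun m => by rw [hPSm m, hSmP m]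
  have hSmSm : ∀ m n, m ≠ n → Sm m * Sm n = 0 := by
    intro m n h
    conv_lhs => rw [← hSmP m, ← hPSm n]
    rw [Matrix.mul_assoc, ← Matrix.mul_assoc (P m) (P n), hPo m n h,
      Matrix.zero_mul, Matrix.mul_zero]
  have hsq : (∑ m, Sm m) ^ 2 = σ := by
    rw [pow_two, Finset.sum_mul_sum]
    calc ∑ m, ∑ n, Sm m * Sm n = ∑ m, Sm m * Sm m := by
          refine Finset.sum_congr rfl fun m _ => ?_
          exact Finset.sum_eq_single_of_mem m (Finset.mem_univ m)
            (fun n _ hn => hSmSm m n (Ne.symm hn))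
      _ = ∑ m, P m * σ * P m := Finset.sum_congr rfl fun m _ => (hT m).sqrt_mul_self
      _ = σ := hσb.symm
  have hpsd : (∑ m, Sm m).PosSemidef := psd_sum (fun m => (hT m).posSemidef_sqrt)
  have hmsq : msqrt σ = ∑ m, Sm m := by
    exact (hpsd.eq_sqrt_of_sq_eq hσ hsq).symm
  have hBH : ∀ m, (P m * A * P m).IsHermitian := fun m => by
    have h := Matrix.isHermitian_conjTranspose_mul_mul (P m) hA
    rwa [show (P m)ᴴ = P m from hPh m] at h
  have htr : ∀ m, (A * Sm m).trace = ((P m * A * P m) * Sm m).trace := by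
    intro m
    calc (A * Sm m).trace
        = ((A * P m * Sm m) * P m).trace := by
            rw [show A * P m * Sm m * P m = A * (P m * Sm m * P m) from by
              noncomm_ring, habs m]
      _ = (P m * (A * P m * Sm m)).trace := Matrix.trace_mul_comm _ _
      _ = ((P m * A * P m) * Sm m).trace := by
            rw [show P m * (A * P m * Sm m) = (P m * A * P m) * Sm m from by
              noncomm_ring]
  have hre : (A * msqrt σ).trace.re = ∑ m, ((P m * A * P m) * Sm m).trace.re := by
    rw [hmsq, Matrix.mul_sum, Matrix.trace_sum, Complex.re_sum]
    exact Finset.sum_congr rfl fun m _ => by rw [htr m]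
  have hcsum : ∑ m, (Sm m * Sm m).trace.re = 1 := by
    have h1 : ∑ m, (Sm m * Sm m).trace.re = (∑ m, P m * σ * P m).trace.re := by
      rw [Matrix.trace_sum, Complex.re_sum]
      exact Finset.sum_congr rfl fun m _ => by rw [(hT m).sqrt_mul_self]
    rw [h1, ← hσb, hσtr, Complex.one_re]
  calc (A * msqrt σ).trace.re
      = ∑ m, ((P m * A * P m) * Sm m).trace.re := hre
    _ ≤ ∑ m, Real.sqrt (((P m * A * P m) * (P m * A * P m)).trace.re) *
          Real.sqrt ((Sm m * Sm m).trace.re) :=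
        Finset.sum_le_sum fun m _ => trace_mul_re_le (hBH m) (hSmH m)
    _ ≤ Real.sqrt (∑ m, ((P m * A * P m) * (P m * A * P m)).trace.re) *
          Real.sqrt (∑ m, (Sm m * Sm m).trace.re) :=
        sum_sqrt_mul_sqrt_le _ _ (fun m => trace_sq_re_nonneg (hBH m))
          (fun m => trace_sq_re_nonneg (hSmH m))
    _ = Real.sqrt (∑ m, ((P m * A * P m) ^ 2).trace.re) := by
        rw [hcsum, Real.sqrt_one, mul_one,
          show (∑ m, ((P m * A * P m) * (P m * A * P m)).trace.re)
              = ∑ m, ((P m * A * P m) ^ 2).trace.re from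
            Finset.sum_congr rfl fun m _ => by rw [pow_two]]

theorem aux_attain {d M : ℕ} (P : Fin M → Matrix (Fin d) (Fin d) ℂ)
    (hPh : ∀ m, (P m).IsHermitian) (hPi : ∀ m, P m * P m = P m)
    (hPo : ∀ m m', m ≠ m' → P m * P m' = 0)
    (A : Matrix (Fin d) (Fin d) ℂ) (hA : A.PosSemidef)
    (hs : 0 < ∑ n, ((P n * A * P n) ^ 2).trace.re) :
    (let σρ : Matrix (Fin d) (Fin d) ℂ :=
        ((∑ n, ((P n * A * P n) ^ 2).trace.re : ℝ) : ℂ)⁻¹ •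
          ∑ m, (P m * A * P m) ^ 2
     σρ.PosSemidef ∧ σρ.trace = 1 ∧ σρ = ∑ m, P m * σρ * P m ∧
      (A * msqrt σρ).trace.re =
        Real.sqrt (∑ m, ((P m * A * P m) ^ 2).trace.re)) := by
  intro σρ
  set S : ℝ := ∑ n, ((P n * A * P n) ^ 2).trace.re with hS_def
  have hSne : (S : ℂ) ≠ 0 := Complex.ofReal_ne_zero.mpr (ne_of_gt hs)
  have hB : ∀ m, (P m * A * P m).PosSemidef := fun m => by
    have h := hA.conjTranspose_mul_mul_same (P m)
    rwa [show (P m)ᴴ = P m from hPh m] at h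
  have hPB : ∀ m, P m * (P m * A * P m) = P m * A * P m := fun m => by
    rw [show P m * (P m * A * P m) = (P m * P m) * A * P m from by noncomm_ring, hPi m]
  have hBP : ∀ m, (P m * A * P m) * P m = P m * A * P m := fun m => by
    rw [Matrix.mul_assoc (P m * A) (P m) (P m), hPi m]
  have hBB : ∀ m n, m ≠ n → (P m * A * P m) * (P n * A * P n) = 0 := fun m n h => by
    rw [show (P m * A * P m) * (P n * A * P n) = P m * A * (P m * P n) * (A * P n)
      from by noncomm_ring, hPo m n h, Matrix.mul_zero, Matrix.zero_mul]
  have hBreal : ∀ m, ((P m * A * P m) ^ 2).trace =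
      ((((P m * A * P m) ^ 2).trace.re : ℝ) : ℂ) := fun m => by
    rw [pow_two]
    exact trace_sq_real (hB m).1
  have hsumtr : ∑ m, ((P m * A * P m) ^ 2).trace = ((S : ℝ) : ℂ) := by
    rw [hS_def]
    push_cast
    exact Finset.sum_congr rfl fun m _ => hBreal m
  -- psd
  have hco : ((S : ℝ) : ℂ)⁻¹ = ((S⁻¹ : ℝ) : ℂ) := by push_cast; ring
  have hσρ : σρ.PosSemidef := by
    rw [show σρ = ((S⁻¹ : ℝ) : ℂ) • ∑ m, (P m * A * P m) ^ 2 from by rw [← hco]]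
    exact psd_smul (psd_sum fun m => (hB m).pow 2) (inv_nonneg.mpr hs.le)
  -- trace
  have htrσρ : σρ.trace = 1 := by
    show ((((S : ℝ) : ℂ)⁻¹ • ∑ m, (P m * A * P m) ^ 2).trace) = 1
    rw [Matrix.trace_smul, Matrix.trace_sum, hsumtr, smul_eq_mul,
      inv_mul_cancel₀ hSne]
  -- block
  have hPBz : ∀ k m, k ≠ m → P k * (P m * A * P m) = 0 := fun k m h => by
    rw [show P k * (P m * A * P m) = (P k * P m) * (A * P m) from by noncomm_ring,
      hPo k m h, Matrix.zero_mul]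
  have hblock : σρ = ∑ k, P k * σρ * P k := by
    have h1 : ∀ k, P k * σρ * P k = ((S : ℝ) : ℂ)⁻¹ • (P k * A * P k) ^ 2 := by
      intro k
      show P k * (((S : ℝ) : ℂ)⁻¹ • ∑ m, (P m * A * P m) ^ 2) * P k = _
      rw [Matrix.mul_smul, Matrix.smul_mul]
      congr 1
      rw [Matrix.mul_sum, Matrix.sum_mul]
      refine Finset.sum_eq_single_of_mem k (Finset.mem_univ k) ?_ |>.trans ?_
      · intro m _ hm
        rw [pow_two, ← Matrix.mul_assoc, hPBz k m (Ne.symm hm), Matrix.zero_mul,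
          Matrix.zero_mul]
      · rw [pow_two, ← Matrix.mul_assoc, hPB k, Matrix.mul_assoc, hBP k, ← pow_two]
    rw [show ∑ k, P k * σρ * P k = ∑ k, ((S : ℝ) : ℂ)⁻¹ • (P k * A * P k) ^ 2 from
      Finset.sum_congr rfl fun k _ => h1 k, ← Finset.smul_sum]
  -- value
  have htpos : 0 < Real.sqrt S := Real.sqrt_pos.mpr hs
  have htne : Real.sqrt S ≠ 0 := ne_of_gt htpos
  set X : Matrix (Fin d) (Fin d) ℂ := (((Real.sqrt S)⁻¹ : ℝ) : ℂ) • ∑ m, P m * A * P m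
    with hX_def
  have hXpsd : X.PosSemidef := psd_smul (psd_sum fun m => hB m)
    (inv_nonneg.mpr htpos.le)
  have hsumsq : (∑ m, P m * A * P m) ^ 2 = ∑ m, (P m * A * P m) ^ 2 := by
    rw [pow_two, Finset.sum_mul_sum]
    refine Finset.sum_congr rfl fun m _ => ?_
    rw [Finset.sum_eq_single_of_mem m (Finset.mem_univ m)
      (fun n _ hn => hBB m n (Ne.symm hn)), pow_two]
  have hX2 : X ^ 2 = σρ := by
    rw [hX_def, smul_pow, hsumsq]
    show ((((Real.sqrt S)⁻¹ : ℝ) : ℂ)) ^ 2 • _ = (((S : ℝ) : ℂ))⁻¹ • _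
    congr 1
    rw [← Complex.ofReal_pow]
    rw [show ((Real.sqrt S)⁻¹) ^ 2 = ((Real.sqrt S) ^ 2)⁻¹ from by
      rw [inv_pow], Real.sq_sqrt hs.le]
    push_cast
    ring
  have hmsqX : msqrt σρ = X := by
    exact (hXpsd.eq_sqrt_of_sq_eq hσρ hX2).symm
  have hABm : ∀ m, (A * (P m * A * P m)).trace = ((P m * A * P m) ^ 2).trace := by
    intro m
    have e1 : (P m * A * P m) ^ 2 = P m * (A * P m * A * P m) := by
      rw [pow_two, show P m * A * P m * (P m * A * P m)
        = P m * (A * (P m * P m) * A * P m) from by noncomm_ring, hPi m]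
    have e2 : (A * P m * A * P m) * P m = A * P m * A * P m := by
      rw [show A * P m * A * P m * P m = A * P m * A * (P m * P m) from by
        noncomm_ring, hPi m]
    calc (A * (P m * A * P m)).trace
        = (A * P m * A * P m).trace := by rw [show A * (P m * A * P m)
            = A * P m * A * P m from by noncomm_ring]
      _ = ((A * P m * A * P m) * P m).trace := by rw [e2]
      _ = (P m * (A * P m * A * P m)).trace := Matrix.trace_mul_comm _ _
      _ = ((P m * A * P m) ^ 2).trace := by rw [← e1]
  have hval : (A * msqrt σρ).trace = (((Real.sqrt S)⁻¹ * S : ℝ) : ℂ) := by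
    rw [hmsqX, hX_def, Matrix.mul_smul, Matrix.trace_smul, Matrix.mul_sum,
      Matrix.trace_sum,
      show ∑ m, (A * (P m * A * P m)).trace = ∑ m, ((P m * A * P m) ^ 2).trace from
        Finset.sum_congr rfl fun m _ => hABm m, hsumtr, smul_eq_mul]
    push_cast
    ring
  have hfin : (Real.sqrt S)⁻¹ * S = Real.sqrt S := by
    rw [inv_mul_eq_div, div_eq_iff htne, Real.mul_self_sqrt hs.le]
  refine ⟨hσρ, htrσρ, hblock, ?_⟩
  rw [hval, hfin, Complex.ofReal_re]

end MTAux

/-- The maximum of `Tr(√ρ√σ)` over block-diagonal states equals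
`(Σ_m Tr[(P_m √ρ P_m)²])^{1/2}`, attained at
`σ_ρ = ⊕_m (P_m √ρ P_m)² / Σ_n Tr[(P_n √ρ P_n)²]`. -/
theorem max_trace_sqrt_mul_sqrt {d M : ℕ}
    (P : Fin M → Matrix (Fin d) (Fin d) ℂ)
    (hPh : ∀ m, (P m).IsHermitian) (hPi : ∀ m, P m * P m = P m)
    (hPo : ∀ m m', m ≠ m' → P m * P m' = 0) (hPs : ∑ m, P m = 1)
    (ρ : Matrix (Fin d) (Fin d) ℂ) (hρ : ρ.PosSemidef) (hρtr : ρ.trace = 1)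
    (hs : 0 < ∑ n, ((P n * msqrt ρ * P n) ^ 2).trace.re) :
    IsGreatest {x : ℝ | ∃ σ : Matrix (Fin d) (Fin d) ℂ, σ.PosSemidef ∧ σ.trace = 1 ∧
        σ = ∑ m, P m * σ * P m ∧ x = (msqrt ρ * msqrt σ).trace.re}
      (Real.sqrt (∑ m, ((P m * msqrt ρ * P m) ^ 2).trace.re)) ∧
    (let σρ : Matrix (Fin d) (Fin d) ℂ :=
        ((∑ n, ((P n * msqrt ρ * P n) ^ 2).trace.re : ℝ) : ℂ)⁻¹ •
          ∑ m, (P m * msqrt ρ * P m) ^ 2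
     σρ.PosSemidef ∧ σρ.trace = 1 ∧ σρ = ∑ m, P m * σρ * P m ∧
      (msqrt ρ * msqrt σρ).trace.re =
        Real.sqrt (∑ m, ((P m * msqrt ρ * P m) ^ 2).trace.re)) := by
  have hA : (msqrt ρ).PosSemidef := by
    exact hρ.posSemidef_sqrt
  have hatt := MTAux.aux_attain P hPh hPi hPo (msqrt ρ) hA hs
  obtain ⟨h1, h2, h3, h4⟩ := hatt
  refine ⟨⟨⟨_, h1, h2, h3, h4.symm⟩, ?_⟩, h1, h2, h3, h4⟩
  rintro x ⟨σ, hσ, hσtr, hσb, rfl⟩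
  exact MTAux.aux_upper P hPh hPi hPo (msqrt ρ) hA.1 σ hσ hσtr hσb
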